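/- arXiv:0708.0697 — 7 statements merged into one kernel-verified Lean document; each statement's English description precedes it below -/
import Mathlib

section
/- For every finite abelian group G with |G| = n, almost every point of the simplex S(G) (with respect to the (n−1)-dimensional Hausdorff measure on S(G) ⊂ ℝ^G) satisfies: the iterates V^k x converge, as k → ∞, to the uniform distribution ν given by ν(g) = 1/n for all g ∈ G (the center of the simplex). -/
open Finset MeasureTheory Filter

/- The quadratic stochastic operator (convolution square) on a finite abelian group:
`(Vx)(h) = ∑_{f,g ∈ G, f+g=h} x(f)·x(g)`. -/
open Classical in
noncomputable def QSO {G : Type*} [AddCommGroup G] [Fintype G] (x : G → ℝ) : G → ℝ :=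
  fun h => ∑ p ∈ Finset.univ.filter (fun p : G × G => p.1 + p.2 = h), x p.1 * x p.2

section Aux
variable {G : Type*} [AddCommGroup G] [Fintype G]

noncomputable def conv (x y : G → ℝ) : G → ℝ := fun h => ∑ f, x f * y (h - f)

lemma QSO_eq (x : G → ℝ) (h : G) : QSO x h = ∑ f, x f * x (h - f) := by
  classical
  rw [QSO, Finset.sum_filter, Fintype.sum_prod_type]
  refine Finset.sum_congr rfl fun a _ => ?_
  have : ∀ b : G, (a + b = h) = (b = h - a) := by
    intro b; rw [eq_comm, eq_sub_iff_add_eq, add_comm, eq_comm]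
  simp only [this, Finset.sum_ite_eq' Finset.univ (h - a), Finset.mem_univ, if_true]

lemma QSO_eq_conv (x : G → ℝ) : QSO x = conv x x := funext fun h => QSO_eq x h

lemma sum_shift (y : G → ℝ) (h : G) : ∑ f, y (h - f) = ∑ f, y f :=
  Fintype.sum_equiv (Equiv.subLeft h) _ _ (fun f => rfl)

lemma sum_shift' (y : G → ℝ) (c : G) : ∑ f, y (f - c) = ∑ f, y f :=
  Fintype.sum_equiv (Equiv.subRight c) _ _ (fun _ => rfl)

lemma sum_conv (x y : G → ℝ) : ∑ h, conv x y h = (∑ g, x g) * (∑ g, y g) := by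
  simp only [conv]
  rw [Finset.sum_comm]
  simp only [← Finset.mul_sum, sum_shift', ← Finset.sum_mul]

lemma conv_nonneg {x y : G → ℝ} (hx : ∀ g, 0 ≤ x g) (hy : ∀ g, 0 ≤ y g) (h : G) :
    0 ≤ conv x y h :=
  Finset.sum_nonneg fun f _ => mul_nonneg (hx f) (hy (h - f))

lemma QSO_decomp (s : ℝ) (z : G → ℝ) (hz : ∑ g, z g = 1) :
    QSO (fun g => (1-s) * ((1:ℝ)/Fintype.card G) + s * z g)
      = fun g => (1 - s^2) * ((1:ℝ)/Fintype.card G) + s^2 * conv z z g := by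
  have hc : (Fintype.card G : ℝ) ≠ 0 := Nat.cast_ne_zero.mpr Fintype.card_ne_zero
  funext h
  rw [QSO_eq]
  set c : ℝ := (1:ℝ)/Fintype.card G with hcdef
  calc ∑ f, ((1-s) * c + s * z f) * ((1-s) * c + s * z (h - f))
      = ∑ f, ((1-s)^2 * (c*c) + ((1-s)*s*c) * z (h-f) + ((1-s)*s*c) * z f
          + s^2 * (z f * z (h-f))) := Finset.sum_congr rfl fun f _ => by ring
    _ = (Fintype.card G : ℝ) * ((1-s)^2 * (c*c)) + ((1-s)*s*c) * 1 + ((1-s)*s*c) * 1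
          + s^2 * conv z z h := by
        simp only [Finset.sum_add_distrib, ← Finset.mul_sum, sum_shift, hz,
          Finset.sum_const, Finset.card_univ, nsmul_eq_mul, conv]
        ring
    _ = (1 - s^2) * c + s^2 * conv z z h := by
        rw [hcdef]; field_simp; ring

lemma qso_tendsto_of_pos (x : G → ℝ) (hx1 : ∑ g, x g = 1) (hpos : ∀ g, 0 < x g) :
    Tendsto (fun k => QSO^[k] x) atTop (nhds (fun _ => (1:ℝ)/Fintype.card G)) := by
  classical
  set n := Fintype.card G with hn
  have hn0 : 0 < n := Fintype.card_pos
  have hnR : (0:ℝ) < n := by exact_mod_cast hn0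
  have hnR1 : (1:ℝ) ≤ n := by exact_mod_cast hn0
  obtain ⟨g₀, -, hg₀⟩ := Finset.exists_min_image Finset.univ x ⟨0, Finset.mem_univ 0⟩
  set c : ℝ := min (x g₀) (1/(2*n)) with hcdef
  have hc0 : 0 < c := lt_min (hpos g₀) (by positivity)
  have hcle : ∀ g, c ≤ x g := fun g => le_trans (min_le_left _ _) (hg₀ g (Finset.mem_univ g))
  have hchalf : c * n ≤ 1/2 := by
    have h1 : c ≤ 1/(2*(n:ℝ)) := min_le_right _ _
    have h2 : (1/(2*(n:ℝ)))*n = 1/2 := by field_simp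
    nlinarith
  set t : ℝ := 1 - c * n with htdef
  have ht1 : t < 1 := by nlinarith
  have ht0 : 0 ≤ t := by simp only [htdef]; linarith
  have htpos : 0 < t := by simp only [htdef]; linarith
  set z : G → ℝ := fun g => (x g - c) / t with hzdef
  have hz0 : ∀ g, 0 ≤ z g := fun g => div_nonneg (by linarith [hcle g]) ht0
  have hz1 : ∑ g, z g = 1 := by
    simp only [hzdef, div_eq_mul_inv, ← Finset.sum_mul, Finset.sum_sub_distrib,
      Finset.sum_const, Finset.card_univ, hx1, nsmul_eq_mul, ← hn]
    rw [mul_comm (n:ℝ) c, ← htdef, mul_inv_cancel₀ (ne_of_gt htpos)]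
  have hx_decomp : x = fun g => (1-t) * ((1:ℝ)/n) + t * z g := by
    funext g
    simp only [hzdef, htdef]
    field_simp
    have ht' : (1 - c * (n:ℝ)) ≠ 0 := (by linarith : (0:ℝ) < 1 - c * n).ne'
    rw [mul_div_right_comm, mul_div_cancel_right₀ _ ht']; ring
  have key : ∀ k : ℕ, ∃ w : G → ℝ, (∀ g, 0 ≤ w g) ∧ (∑ g, w g = 1) ∧
      QSO^[k] x = fun g => (1 - t^(2^k)) * ((1:ℝ)/n) + t^(2^k) * w g := by
    intro k; induction k with
    | zero => exact ⟨z, hz0, hz1, by simpa using hx_decomp⟩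
    | succ k ih =>
      obtain ⟨w, hw0, hw1, hwe⟩ := ih
      refine ⟨conv w w, conv_nonneg hw0 hw0, by rw [sum_conv, hw1]; ring, ?_⟩
      rw [Function.iterate_succ_apply', hwe, QSO_decomp _ _ hw1]
      funext g
      rw [pow_succ 2 k, pow_mul]
  rw [tendsto_pi_nhds]
  intro g
  have htend : Tendsto (fun k : ℕ => t ^ 2^k) atTop (nhds 0) :=
    (tendsto_pow_atTop_nhds_zero_of_lt_one ht0 ht1).comp
      (tendsto_pow_atTop_atTop_of_one_lt (α := ℕ) one_lt_two)
  have hmain : Tendsto (fun k => QSO^[k] x g - 1/(n:ℝ)) atTop (nhds 0) := by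
    apply squeeze_zero_norm (a := fun k => 2 * t^2^k)
    · intro k
      obtain ⟨w, hw0, hw1, hwe⟩ := key k
      rw [hwe]
      have hwle : w g ≤ 1 := hw1 ▸ Finset.single_le_sum (fun i _ => hw0 i) (Finset.mem_univ g)
      have hinv0 : (0:ℝ) ≤ 1/n := by positivity
      have hinv1 : (1:ℝ)/n ≤ 1 := by
        rw [div_le_one hnR]; exact hnR1
      have heq : (1 - t^2^k) * ((1:ℝ)/n) + t^2^k * w g - 1/(n:ℝ)
          = t^2^k * (w g - 1/(n:ℝ)) := by ring
      rw [heq, norm_mul, Real.norm_eq_abs, Real.norm_eq_abs,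
        abs_of_nonneg (pow_nonneg ht0 _)]
      have habs : |w g - 1/(n:ℝ)| ≤ 2 := abs_le.mpr ⟨by linarith [hw0 g], by linarith [hw0 g]⟩
      calc t^2^k * |w g - 1/(n:ℝ)| ≤ t^2^k * 2 :=
            mul_le_mul_of_nonneg_left habs (pow_nonneg ht0 _)
        _ = 2 * t^2^k := by ring
    · simpa using htend.const_mul 2
  simpa using hmain.add_const (1/(n:ℝ))

end Aux

section MeasurePart
variable {G : Type*} [AddCommGroup G] [Fintype G]

open Module in
lemma face_null (g₀ : G) :
    (μH[(Fintype.card G : ℝ) - 1] : Measure (G → ℝ))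
      {x : G → ℝ | x g₀ = 0 ∧ ∑ g, x g = 1} = 0 := by
  classical
  set S := {x : G → ℝ | x g₀ = 0 ∧ ∑ g, x g = 1} with hS
  by_cases hne : S.Nonempty
  swap
  · rw [Set.not_nonempty_iff_eq_empty.mp hne]; simp
  obtain ⟨p, hp0, hp1⟩ := hne
  have hn1 : 1 ≤ Fintype.card G := Fintype.card_pos
  have hn2 : 2 ≤ Fintype.card G := by
    by_contra h
    have hcard : Fintype.card G = 1 := le_antisymm (by omega) hn1
    have hsub : Subsingleton G := Fintype.card_le_one_iff_subsingleton.mp (le_of_eq hcard)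
    have : ∑ g, p g = p g₀ * Fintype.card G := by
      rw [Finset.sum_congr rfl fun g _ => congrArg p (Subsingleton.elim g g₀)]
      simp [Finset.card_univ, mul_comm]
    rw [hp1, hp0, hcard] at this
    norm_num at this
  -- the linear map x ↦ (x g₀, ∑ x)
  set L : (G → ℝ) →ₗ[ℝ] ℝ × ℝ :=
    LinearMap.prod (LinearMap.proj g₀) (∑ g : G, LinearMap.proj g) with hL
  have hLapp : ∀ x : G → ℝ, L x = (x g₀, ∑ g, x g) := by
    intro x; simp [hL, LinearMap.sum_apply, LinearMap.proj_apply]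
  have hLsurj : Function.Surjective L := by
    rintro ⟨a, b⟩
    obtain ⟨g₁, hg₁⟩ := Fintype.exists_ne_of_one_lt_card (by omega) g₀
    refine ⟨(Pi.single g₀ a + Pi.single g₁ (b - a) : G → ℝ), ?_⟩
    rw [hLapp]
    have h1 : (Pi.single g₀ a + Pi.single g₁ (b - a) : G → ℝ) g₀ = a := by
      simp [Pi.single_eq_same, Pi.single_eq_of_ne (Ne.symm hg₁)]
    have h2 : ∑ g, (Pi.single g₀ a + Pi.single g₁ (b - a) : G → ℝ) g = b := by
      simp [Finset.sum_add_distrib, Finset.sum_pi_single']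
    rw [h1, h2]
  set W := LinearMap.ker L with hW
  have hfr : finrank ℝ W = Fintype.card G - 2 := by
    have h3 := LinearMap.finrank_range_add_finrank_ker L
    rw [LinearMap.range_eq_top.mpr hLsurj] at h3
    have h2 : finrank ℝ (⊤ : Submodule ℝ (ℝ × ℝ)) = 2 := by simp
    have hdom : finrank ℝ (G → ℝ) = Fintype.card G := by simp
    rw [h2, hdom] at h3
    exact Nat.eq_sub_of_add_eq' h3
  -- S is contained in a translate of W
  have hsub : S ⊆ (fun y => p + y) '' (W : Set (G → ℝ)) := by
    intro x hx
    refine ⟨x - p, ?_, by funext g; simp⟩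
    simp only [SetLike.mem_coe, LinearMap.mem_ker, hLapp, hW]
    simp only [Pi.sub_apply, Finset.sum_sub_distrib, hx.1, hx.2, hp0, hp1]
    simp [Prod.ext_iff]
  -- dimension estimate
  have hiso : Isometry (fun y : G → ℝ => p + y) :=
    Isometry.of_dist_eq fun a b => dist_add_left p a b
  have hiso2 : Isometry (Subtype.val : W → (G → ℝ)) := fun a b => rfl
  have hdim : dimH S ≤ (Fintype.card G - 2 : ℕ) := by
    calc dimH S ≤ dimH ((fun y => p + y) '' (W : Set (G → ℝ))) := dimH_mono hsub
      _ = dimH (W : Set (G → ℝ)) := hiso.dimH_image _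
      _ = dimH (Subtype.val '' (Set.univ : Set W)) := by
          rw [Set.image_univ, Subtype.range_coe]
      _ = dimH (Set.univ : Set W) := hiso2.dimH_image _
      _ = finrank ℝ W := Real.dimH_univ_eq_finrank W
      _ = (Fintype.card G - 2 : ℕ) := by rw [hfr]
  have hd : ((Fintype.card G : ℝ) - 1) = (((Fintype.card G - 1 : ℕ) : NNReal) : ℝ) := by
    rw [NNReal.coe_natCast]
    push_cast [Nat.cast_sub hn1]
    ring
  rw [hd]
  apply hausdorffMeasure_of_dimH_lt
  refine lt_of_le_of_lt hdim ?_
  have h4 : ((Fintype.card G - 2 : ℕ) : ENNReal) < ((Fintype.card G - 1 : ℕ) : ENNReal) := by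
    exact_mod_cast Nat.sub_lt_sub_left (by omega) (by omega)
  exact_mod_cast h4

end MeasurePart

/-- Almost every point of the simplex `S(G) ⊂ ℝ^G` — with respect to the
`(n-1)`-dimensional Hausdorff measure restricted to the simplex, where `n = |G|` —
has its orbit under the quadratic stochastic operator `V` converging to the
uniform distribution `ν(g) = 1/n` (the center of the simplex). -/
theorem qso_ae_tendsto_center {G : Type*} [AddCommGroup G] [Fintype G] :
    ∀ᵐ x ∂((μH[(Fintype.card G : ℝ) - 1] :
        Measure (G → ℝ)).restrict {x : G → ℝ | (∀ g, 0 ≤ x g) ∧ ∑ g, x g = 1}),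
      Tendsto (fun k => QSO^[k] x) atTop
        (nhds (fun _ => (1 : ℝ) / Fintype.card G)) := by
  classical
  have hs : MeasurableSet {x : G → ℝ | (∀ g, 0 ≤ x g) ∧ ∑ g, x g = 1} := by
    rw [Set.setOf_and]
    have h1 : MeasurableSet {x : G → ℝ | ∀ g, 0 ≤ x g} := by
      rw [Set.setOf_forall]
      exact MeasurableSet.iInter fun g =>
        measurableSet_le measurable_const (measurable_pi_apply g)
    have h2 : MeasurableSet {x : G → ℝ | ∑ g, x g = 1} :=
      measurableSet_eq_fun (Finset.measurable_sum _ fun g _ => measurable_pi_apply g)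
        measurable_const
    exact h1.inter h2
  rw [ae_iff, Measure.restrict_apply' hs]
  have hsub : {x : G → ℝ | ¬ Tendsto (fun k => QSO^[k] x) atTop
        (nhds (fun _ => (1 : ℝ) / Fintype.card G))}
      ∩ {x : G → ℝ | (∀ g, 0 ≤ x g) ∧ ∑ g, x g = 1}
      ⊆ ⋃ g₀ : G, {x : G → ℝ | x g₀ = 0 ∧ ∑ g, x g = 1} := by
    rintro x ⟨hnt, hx0, hx1⟩
    by_cases hpos : ∀ g, 0 < x g
    · exact absurd (qso_tendsto_of_pos x hx1 hpos) hnt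
    · push_neg at hpos
      obtain ⟨g₀, hg₀⟩ := hpos
      exact Set.mem_iUnion.mpr ⟨g₀, le_antisymm hg₀ (hx0 g₀), hx1⟩
  refine le_antisymm ?_ zero_le
  refine le_trans (measure_mono hsub) ?_
  rw [measure_iUnion_null fun g₀ => face_null g₀]
end

section
/- Let k, n be positive integers with n ≥ k and let p ∈ [1/(k+1), 1/k]. Then the maximum of Σ_{i=1}^{n+1} x_i² over all (x_1, …, x_{n+1}) with Σ_{i=1}^{n+1} x_i = 1 and 0 ≤ x_i ≤ p for all i equals k·p² + (1 − k·p)². -/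
open Finset

lemma key_lemma (p : ℝ) (hp : 0 < p) {ι : Type*} [DecidableEq ι] (t : Finset ι) (x : ι → ℝ)
    (h0 : ∀ i, 0 ≤ x i) (h1 : ∀ i, x i ≤ p) :
    ∃ (m : ℕ) (s : ℝ), 0 ≤ s ∧ s ≤ p ∧ (∑ i ∈ t, x i) = m * p + s ∧
      s * (p - s) ≤ ∑ i ∈ t, x i * (p - x i) := by
  induction t using Finset.induction_on with
  | empty => exact ⟨0, 0, le_refl _, hp.le, by simp, by simp⟩
  | @insert a t ha ih =>
    obtain ⟨m, s, hs0, hsp, hsum, hle⟩ := ih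
    by_cases hc : s + x a ≤ p
    · refine ⟨m, s + x a, by linarith [h0 a], hc, ?_, ?_⟩
      · rw [Finset.sum_insert ha, hsum]; ring
      · rw [Finset.sum_insert ha]
        nlinarith [h0 a, hs0, mul_nonneg hs0 (h0 a)]
    · push_neg at hc
      refine ⟨m + 1, s + x a - p, by linarith, by linarith [h1 a, hsp], ?_, ?_⟩
      · rw [Finset.sum_insert ha, hsum]; push_cast; ring
      · rw [Finset.sum_insert ha]
        nlinarith [mul_nonneg (sub_nonneg.mpr hsp) (sub_nonneg.mpr (h1 a))]

lemma sum_aux (n k : ℕ) (hk : k ≤ n) (a b : ℝ) :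
    ∑ i : Fin (n + 1), (if (i : ℕ) < k then a else if (i : ℕ) = k then b else 0)
      = k * a + b := by
  rw [Fin.sum_univ_eq_sum_range (fun i => if i < k then a else if i = k then b else 0)]
  have hpt : ∀ i, (if i < k then a else if i = k then b else 0)
      = (if i ∈ Finset.range k then a else 0) + (if i = k then b else 0) := by
    intro i
    by_cases h1 : i < k
    · simp [h1, Finset.mem_range, Nat.ne_of_lt h1]
    · simp [h1, Finset.mem_range]
  rw [Finset.sum_congr rfl (fun i _ => hpt i), Finset.sum_add_distrib]
  rw [Finset.sum_ite_mem, Finset.sum_ite_eq' (Finset.range (n + 1)) k (fun _ => b)]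
  have h2 : Finset.range (n + 1) ∩ Finset.range k = Finset.range k :=
    Finset.inter_eq_right.mpr (Finset.range_subset_range.mpr (by omega))
  rw [h2, if_pos (Finset.mem_range.mpr (by omega))]
  simp [mul_comm]

/-- Let `k, n` be positive integers with `n ≥ k` and `p ∈ [1/(k+1), 1/k]`. Then the
maximum of `∑ xᵢ²` over all `(x₁, …, x_{n+1})` with `∑ xᵢ = 1` and `0 ≤ xᵢ ≤ p` equals
`k·p² + (1 − k·p)²`. -/
theorem max_sum_sq_eq (k n : ℕ) (hk : 0 < k) (hn : k ≤ n) (p : ℝ)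
    (hp : p ∈ Set.Icc (1 / (k + 1 : ℝ)) (1 / (k : ℝ))) :
    IsGreatest
      {s : ℝ | ∃ x : Fin (n + 1) → ℝ,
        (∀ i, 0 ≤ x i) ∧ (∀ i, x i ≤ p) ∧ (∑ i, x i = 1) ∧ s = ∑ i, (x i) ^ 2}
      ((k : ℝ) * p ^ 2 + (1 - (k : ℝ) * p) ^ 2) := by
  have hkR : (0 : ℝ) < k := by exact_mod_cast hk
  have hk1 : (0 : ℝ) < (k : ℝ) + 1 := by linarith
  have hp0 : 0 < p := lt_of_lt_of_le (by positivity) hp.1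
  have hkp1 : (k : ℝ) * p ≤ 1 := by
    have := hp.2
    rw [le_div_iff₀ hkR] at this
    linarith
  have h1kp : 1 ≤ ((k : ℝ) + 1) * p := by
    have := hp.1
    rw [div_le_iff₀ hk1] at this
    linarith
  set r : ℝ := 1 - (k : ℝ) * p with hr
  have hr0 : 0 ≤ r := by simp [hr]; linarith
  have hrp : r ≤ p := by simp [hr]; nlinarith
  constructor
  · -- membership
    refine ⟨fun i => if (i : ℕ) < k then p else if (i : ℕ) = k then r else 0, ?_, ?_, ?_, ?_⟩
    · intro i; dsimp only; split_ifs <;> linarith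
    · intro i; dsimp only; split_ifs <;> linarith
    · rw [sum_aux n k hn p r]; simp [hr]
    · have : ∀ i : Fin (n + 1),
          ((if (i : ℕ) < k then p else if (i : ℕ) = k then r else 0) : ℝ) ^ 2
            = (if (i : ℕ) < k then p ^ 2 else if (i : ℕ) = k then r ^ 2 else 0) := by
        intro i; split_ifs <;> ring
      rw [Finset.sum_congr rfl (fun i _ => this i), sum_aux n k hn (p ^ 2) (r ^ 2)]
  · -- upper bound
    rintro s ⟨x, h0, h1, hsum, rfl⟩
    obtain ⟨m, u, hu0, hup, hmu, hF⟩ :=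
      key_lemma p hp0 (Finset.univ : Finset (Fin (n + 1))) x h0 h1
    rw [hsum] at hmu
    have hsq : ∑ i, (x i) ^ 2 + ∑ i, x i * (p - x i) = p := by
      rw [← Finset.sum_add_distrib]
      have hpt : ∀ i ∈ Finset.univ, (x i) ^ 2 + x i * (p - x i) = p * x i := fun i _ => by ring
      rw [Finset.sum_congr rfl hpt, ← Finset.mul_sum, hsum, mul_one]
    have hrv : r * (p - r) ≤ u * (p - u) := by
      rcases Nat.lt_trichotomy m k with h | h | h
      · -- m < k : u - r = (k - m) p ≥ p, so u = p, r = 0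
        have : (m : ℝ) + 1 ≤ k := by exact_mod_cast h
        have hur : u - r = ((k : ℝ) - m) * p := by rw [hr]; linarith [hmu]; 
        have : r ≤ 0 := by nlinarith
        have : r = 0 := le_antisymm this hr0
        rw [this]; simp; nlinarith
      · have : u = r := by
          rw [hr]; subst h; linarith [hmu]
        rw [this]
      · have hm : (k : ℝ) + 1 ≤ m := by exact_mod_cast h
        have hrp' : p ≤ r := by
          have : r - u = ((m : ℝ) - k) * p := by rw [hr]; linarith [hmu]
          nlinarith
        have : r = p := le_antisymm hrp hrp'
        rw [this]; simp; nlinarith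
    have hid : (k : ℝ) * p ^ 2 + r ^ 2 = p - r * (p - r) := by
      rw [hr]; ring
    linarith [hF, hrv, hsq, hid]
end

section
/- For n ≥ 2 and 1/n ≤ p < 1, the maximal sums of squares satisfy the recurrence f_n(p) = p² + (1 − p)²·f_{n−1}(p/(1 − p)), where f_m(q) denotes the maximum of Σ_{i=1}^{m+1} x_i² over all (x_1, …, x_{m+1}) with Σ x_i = 1 and 0 ≤ x_i ≤ q (assuming the constraint sets on both sides are nonempty, i.e. (n+1)p ≥ 1 and n·p/(1−p) ≥ 1). -/
open Finset

lemma isCompact_feas (k : ℕ) (q : ℝ) :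
    IsCompact {x : Fin k → ℝ | (∀ i, 0 ≤ x i) ∧ (∀ i, x i ≤ q) ∧ ∑ i, x i = 1} := by
  apply IsCompact.of_isClosed_subset (isCompact_Icc (a := (0 : Fin k → ℝ)) (b := fun _ => q))
  · have h1 : IsClosed {x : Fin k → ℝ | ∀ i, 0 ≤ x i} := by
      have : {x : Fin k → ℝ | ∀ i, 0 ≤ x i} = ⋂ i, {x | 0 ≤ x i} := by ext; simp
      rw [this]; exact isClosed_iInter fun i => isClosed_le continuous_const (continuous_apply i)
    have h2 : IsClosed {x : Fin k → ℝ | ∀ i, x i ≤ q} := by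
      have : {x : Fin k → ℝ | ∀ i, x i ≤ q} = ⋂ i, {x | x i ≤ q} := by ext; simp
      rw [this]; exact isClosed_iInter fun i => isClosed_le (continuous_apply i) continuous_const
    have h3 : IsClosed {x : Fin k → ℝ | ∑ i, x i = 1} :=
      isClosed_eq (continuous_finset_sum _ fun i _ => continuous_apply i) continuous_const
    have : {x : Fin k → ℝ | (∀ i, 0 ≤ x i) ∧ (∀ i, x i ≤ q) ∧ ∑ i, x i = 1}
        = {x | ∀ i, 0 ≤ x i} ∩ ({x | ∀ i, x i ≤ q} ∩ {x | ∑ i, x i = 1}) := by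
      ext; simp [Set.mem_setOf_eq, and_assoc]
    rw [this]; exact h1.inter (h2.inter h3)
  · rintro x ⟨h1, h2, -⟩
    exact Set.mem_Icc.2 ⟨fun i => h1 i, fun i => h2 i⟩

lemma cont_sumsq (k : ℕ) : Continuous (fun x : Fin k → ℝ => ∑ i, x i ^ 2) :=
  continuous_finset_sum _ fun i _ => (continuous_apply i).pow 2

lemma setS_eq (k : ℕ) (q : ℝ) :
    {s : ℝ | ∃ x : Fin (k+1) → ℝ, (∀ i, 0 ≤ x i) ∧ (∀ i, x i ≤ q) ∧ (∑ i, x i = 1) ∧ s = ∑ i, (x i) ^ 2}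
    = (fun x : Fin (k+1) → ℝ => ∑ i, x i ^ 2) ''
      {x | (∀ i, 0 ≤ x i) ∧ (∀ i, x i ≤ q) ∧ ∑ i, x i = 1} := by
  ext s
  constructor
  · rintro ⟨x, h1, h2, h3, rfl⟩; exact ⟨x, ⟨h1, h2, h3⟩, rfl⟩
  · rintro ⟨x, ⟨h1, h2, h3⟩, rfl⟩; exact ⟨x, h1, h2, h3, rfl⟩

/-- `f m q` is the maximum (supremum) of the sum of squares of `m+1` nonnegative reals,
each at most `q`, whose total sum is `1`. -/
noncomputable def maxSumSq (m : ℕ) (q : ℝ) : ℝ :=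
  sSup {s : ℝ | ∃ x : Fin (m + 1) → ℝ,
    (∀ i, 0 ≤ x i) ∧ (∀ i, x i ≤ q) ∧ (∑ i, x i = 1) ∧ s = ∑ i, (x i) ^ 2}

/-- For `n ≥ 2` and `1/n ≤ p < 1` (with both constraint sets nonempty, i.e.
`(n+1)·p ≥ 1` and `n·(p/(1-p)) ≥ 1`), the maximal sums of squares satisfy the
recurrence `f_n(p) = p² + (1-p)² · f_{n-1}(p/(1-p))`. -/
theorem maxSumSq_recurrence (n : ℕ) (hn : 2 ≤ n) (p : ℝ)
    (hp₁ : 1 / (n : ℝ) ≤ p) (hp₂ : p < 1)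
    (hne₁ : 1 ≤ ((n : ℝ) + 1) * p) (hne₂ : 1 ≤ (n : ℝ) * (p / (1 - p))) :
    maxSumSq n p = p ^ 2 + (1 - p) ^ 2 * maxSumSq (n - 1) (p / (1 - p)) := by
  obtain ⟨m, rfl⟩ : ∃ m, n = m + 1 := ⟨n - 1, by omega⟩
  have hm : 1 ≤ m := by omega
  set q : ℝ := p / (1 - p) with hqdef
  have hnpos : (0:ℝ) < (m:ℝ) + 1 := by positivity
  have hp0 : 0 < p := lt_of_lt_of_le (by positivity) hp₁
  have h1p : 0 < 1 - p := by linarith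
  have hq0 : 0 < q := div_pos hp0 h1p
  have h1p' : (1 - p) ≠ 0 := ne_of_gt h1p
  have hpq : (1 - p) * q = p := by rw [hqdef]; field_simp
  -- feasible sets
  set K₂ : Set (Fin (m + 2) → ℝ) :=
    {x | (∀ i, 0 ≤ x i) ∧ (∀ i, x i ≤ p) ∧ ∑ i, x i = 1} with hK₂def
  set K₁ : Set (Fin (m + 1) → ℝ) :=
    {x | (∀ i, 0 ≤ x i) ∧ (∀ i, x i ≤ q) ∧ ∑ i, x i = 1} with hK₁def
  have hK₂ne : K₂.Nonempty := by
    refine ⟨fun _ => 1 / ((m:ℝ) + 2), fun i => by positivity, fun i => ?_, ?_⟩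
    · rw [div_le_iff₀ (by positivity)]
      push_cast at hne₁ ⊢
      linarith [hne₁]
    · rw [Finset.sum_const, Finset.card_univ, Fintype.card_fin, nsmul_eq_mul]
      push_cast
      field_simp
  have hK₁ne : K₁.Nonempty := by
    refine ⟨fun _ => 1 / ((m:ℝ) + 1), fun i => by positivity, fun i => ?_, ?_⟩
    · rw [div_le_iff₀ (by positivity)]
      push_cast at hne₂ ⊢
      linarith [hne₂]
    · rw [Finset.sum_const, Finset.card_univ, Fintype.card_fin, nsmul_eq_mul]
      push_cast
      field_simp
  have hC₂ := isCompact_feas (m + 2) p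
  have hC₁ := isCompact_feas (m + 1) q
  have hbdd₂ : BddAbove ((fun x : Fin (m+2) → ℝ => ∑ i, x i ^ 2) '' K₂) :=
    (hC₂.image (cont_sumsq _)).bddAbove
  have hbdd₁ : BddAbove ((fun x : Fin (m+1) → ℝ => ∑ i, x i ^ 2) '' K₁) :=
    (hC₁.image (cont_sumsq _)).bddAbove
  -- maximizer for K₂
  obtain ⟨x, hxK, hxmax⟩ := hC₂.exists_isMaxOn hK₂ne (cont_sumsq (m+2)).continuousOn
  obtain ⟨hx0, hxp, hxsum⟩ := hxK
  have hSup₂ : maxSumSq (m + 1) p = ∑ i, x i ^ 2 := by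
    unfold maxSumSq
    rw [setS_eq]
    exact IsGreatest.csSup_eq ⟨⟨x, ⟨hx0, hxp, hxsum⟩, rfl⟩, fun s ⟨z, hz, hzs⟩ => hzs ▸ hxmax hz⟩
  -- some coordinate equals p
  have hex : ∃ k, x k = p := by
    by_contra hcon
    push_neg at hcon
    have hlt : ∀ i, x i < p := fun i => lt_of_le_of_ne (hxp i) (hcon i)
    obtain ⟨i₀, -, hi₀⟩ := Finset.exists_max_image Finset.univ x ⟨0, Finset.mem_univ 0⟩
    have hj : ∃ j, j ≠ i₀ ∧ 0 < x j := by
      by_contra hc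
      push_neg at hc
      have hzero : ∀ j, j ≠ i₀ → x j = 0 := fun j hji =>
        le_antisymm (hc j hji) (hx0 j)
      have : ∑ i, x i = x i₀ :=
        Finset.sum_eq_single_of_mem i₀ (Finset.mem_univ _) (fun j _ hji => hzero j hji)
      rw [hxsum] at this
      have := hlt i₀
      linarith
    obtain ⟨j, hji, hjpos⟩ := hj
    set ε : ℝ := min (p - x i₀) (x j) with hεdef
    have hε0 : 0 < ε := lt_min (by linarith [hlt i₀]) hjpos
    have hε1 : ε ≤ p - x i₀ := min_le_left _ _
    have hε2 : ε ≤ x j := min_le_right _ _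
    set x' : Fin (m+2) → ℝ :=
      fun i => x i + (if i = i₀ then ε else 0) - (if i = j then ε else 0) with hx'def
    have hx'i₀ : x' i₀ = x i₀ + ε := by simp [hx'def, hji.symm, Ne.symm hji]
    have hx'j : x' j = x j - ε := by simp [hx'def, hji]
    have hx'other : ∀ i, i ≠ i₀ → i ≠ j → x' i = x i := by
      intro i h1 h2; simp [hx'def, h1, h2]
    have hx'K : x' ∈ K₂ := by
      refine ⟨fun i => ?_, fun i => ?_, ?_⟩
      · rcases eq_or_ne i i₀ with rfl | h1
        · rw [hx'i₀]; linarith [hx0 i]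
        · rcases eq_or_ne i j with rfl | h2
          · rw [hx'j]; linarith
          · rw [hx'other i h1 h2]; exact hx0 i
      · rcases eq_or_ne i i₀ with rfl | h1
        · rw [hx'i₀]; linarith
        · rcases eq_or_ne i j with rfl | h2
          · rw [hx'j]; linarith [hlt i]
          · rw [hx'other i h1 h2]; exact hxp i
      · have : ∀ i ∈ Finset.univ, x' i = x i + (if i = i₀ then ε else 0) - (if i = j then ε else 0) :=
          fun i _ => rfl
        rw [Finset.sum_congr rfl this]
        simp only [Finset.sum_sub_distrib, Finset.sum_add_distrib,
          Finset.sum_ite_eq' Finset.univ, Finset.mem_univ, if_true]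
        rw [hxsum]; ring
    have hgain : ∑ i, x i ^ 2 < ∑ i, x' i ^ 2 := by
      have key : ∑ i, (x' i ^ 2 - x i ^ 2) = 2 * ε * (x i₀ - x j) + 2 * ε ^ 2 := by
        have hsub : ∑ i, (x' i ^ 2 - x i ^ 2) = ∑ i ∈ ({i₀, j} : Finset (Fin (m+2))), (x' i ^ 2 - x i ^ 2) := by
          refine (Finset.sum_subset (Finset.subset_univ _) ?_).symm
          intro i _ hi
          simp only [Finset.mem_insert, Finset.mem_singleton, not_or] at hi
          rw [hx'other i hi.1 hi.2]; ring
        rw [hsub, Finset.sum_pair (Ne.symm hji), hx'i₀, hx'j]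
        ring
      have hxij : x j ≤ x i₀ := hi₀ j (Finset.mem_univ _)
      have : 0 < ∑ i, (x' i ^ 2 - x i ^ 2) := by
        rw [key]; nlinarith
      rw [Finset.sum_sub_distrib] at this
      linarith
    exact absurd (hxmax hx'K) (by simpa using hgain)
  obtain ⟨k, hk⟩ := hex
  -- upper bound: maxSumSq (m+1) p ≤ p^2 + (1-p)^2 * maxSumSq m q
  set y : Fin (m+1) → ℝ := fun i => x (k.succAbove i) / (1 - p) with hydef
  have hsplit := Fin.sum_univ_succAbove x k
  have hysum : ∑ i, y i = 1 := by
    have : ∑ i, y i = (∑ i, x (k.succAbove i)) / (1 - p) := by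
      rw [Finset.sum_div]
    rw [this]
    rw [hxsum, hk] at hsplit
    rw [show (∑ i, x (k.succAbove i)) = 1 - p by linarith]
    field_simp
  have hyK : y ∈ K₁ := by
    refine ⟨fun i => div_nonneg (hx0 _) h1p.le, fun i => ?_, hysum⟩
    show x (k.succAbove i) / (1 - p) ≤ q
    rw [hqdef]
    gcongr
    exact hxp _
  have hxy : ∀ i, x (k.succAbove i) = (1 - p) * y i := by
    intro i; rw [hydef]; field_simp
  have hsq : ∑ i, x i ^ 2 = p ^ 2 + (1 - p) ^ 2 * ∑ i, y i ^ 2 := by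
    rw [Fin.sum_univ_succAbove (fun i => x i ^ 2) k, hk]
    congr 1
    rw [Finset.mul_sum]
    exact Finset.sum_congr rfl fun i _ => by rw [hxy i]; ring
  have hyle : ∑ i, y i ^ 2 ≤ maxSumSq m q := by
    unfold maxSumSq
    rw [setS_eq]
    exact le_csSup hbdd₁ ⟨y, hyK, rfl⟩
  -- lower bound
  have hrepr₁ : maxSumSq m q = sSup ((fun x : Fin (m+1) → ℝ => ∑ i, x i ^ 2) '' K₁) := by
    unfold maxSumSq; rw [setS_eq]
  have hrepr₂ : maxSumSq (m+1) p = sSup ((fun x : Fin (m+2) → ℝ => ∑ i, x i ^ 2) '' K₂) := by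
    unfold maxSumSq; rw [setS_eq]
  have hge : maxSumSq m q ≤ (maxSumSq (m+1) p - p ^ 2) / (1 - p) ^ 2 := by
    rw [hrepr₁]
    apply csSup_le (hK₁ne.image _)
    rintro s ⟨y', hy'K, rfl⟩
    obtain ⟨hy'0, hy'q, hy'sum⟩ := hy'K
    set z : Fin (m+2) → ℝ := Fin.cons p (fun i => (1 - p) * y' i) with hzdef
    have hz0 : z 0 = p := rfl
    have hzs : ∀ i : Fin (m+1), z i.succ = (1 - p) * y' i := fun i => by
      simp [hzdef]
    have hzK : z ∈ K₂ := by
      refine ⟨fun i => ?_, fun i => ?_, ?_⟩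
      · induction i using Fin.cases with
        | zero => rw [hz0]; exact hp0.le
        | succ i => rw [hzs]; exact mul_nonneg h1p.le (hy'0 i)
      · induction i using Fin.cases with
        | zero => rw [hz0]
        | succ i =>
          rw [hzs]
          calc (1 - p) * y' i ≤ (1 - p) * q :=
                mul_le_mul_of_nonneg_left (hy'q i) h1p.le
            _ = p := hpq
      · rw [Fin.sum_univ_succ]
        simp only [hzs, hz0]
        rw [← Finset.mul_sum, hy'sum]
        ring
    have hzsq : ∑ i, z i ^ 2 = p ^ 2 + (1 - p) ^ 2 * ∑ i, y' i ^ 2 := by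
      have h0 : ∑ i, z i ^ 2 = z 0 ^ 2 + ∑ i : Fin (m+1), z i.succ ^ 2 :=
        Fin.sum_univ_succ (fun i => z i ^ 2)
      rw [h0, hz0]
      simp only [hzs]
      rw [show ∑ i : Fin (m+1), ((1-p) * y' i) ^ 2 = (1-p)^2 * ∑ i, y' i ^ 2 by
        rw [Finset.mul_sum]; exact Finset.sum_congr rfl fun i _ => by ring]
    have hT : p ^ 2 + (1 - p) ^ 2 * ∑ i, y' i ^ 2 ≤ maxSumSq (m+1) p := by
      rw [hrepr₂]
      exact le_csSup hbdd₂ ⟨z, hzK, hzsq⟩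
    rw [le_div_iff₀ (by positivity)]
    show (∑ i, y' i ^ 2) * (1 - p) ^ 2 ≤ _
    linarith
  -- combine
  have h1 : maxSumSq (m+1) p ≤ p ^ 2 + (1 - p) ^ 2 * maxSumSq m q := by
    rw [hSup₂, hsq]
    nlinarith [hyle]
  have h2 : (1 - p) ^ 2 * maxSumSq m q ≤ maxSumSq (m+1) p - p ^ 2 := by
    rw [mul_comm]
    exact (le_div_iff₀ (by positivity)).mp hge
  have : (m + 1 : ℕ) - 1 = m := by omega
  rw [this]
  linarith
end

section
/- Let G be a finite abelian group with |G| = n, let k be a positive integer with k ≤ n, and let p ∈ [1/(k+1), 1/k]. If x ∈ S(G) satisfies ‖x‖_∞ ≤ p, then ‖Vx‖_∞ ≤ k·p² + (1 − k·p)². In particular, the set {x ∈ S(G) : ‖x‖_∞ ≤ p} is mapped by V into the set {x ∈ S(G) : ‖x‖_∞ ≤ f(p)} where f(p) = k·p² + (1 − k·p)². -/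
open Finset

/- The quadratic stochastic operator (convolution square) on a finite abelian group:
`(Vx)(h) = ∑_{f,g ∈ G, f+g=h} x(f)·x(g)`. -/
lemma fold_lemma {α : Type*} [DecidableEq α] (x : α → ℝ) (p : ℝ) (hp : 0 ≤ p)
    (hx : ∀ a, 0 ≤ x a ∧ x a ≤ p) (s : Finset α) :
    ∃ (m : ℕ) (r : ℝ), 0 ≤ r ∧ r ≤ p ∧ (∑ a ∈ s, x a) = m * p + r ∧
      r * (p - r) ≤ ∑ a ∈ s, x a * (p - x a) := by
  induction s using Finset.induction with
  | empty => exact ⟨0, 0, le_refl _, hp, by simp, by simp⟩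
  | insert a s' ha ih =>
    obtain ⟨m, r, h0, h1, h2, h3⟩ := ih
    obtain ⟨hxa0, hxa1⟩ := hx a
    by_cases hc : x a + r ≤ p
    · refine ⟨m, x a + r, by positivity, hc, ?_, ?_⟩
      · rw [Finset.sum_insert ha, h2]; ring
      · rw [Finset.sum_insert ha]
        nlinarith [mul_nonneg hxa0 h0]
    · refine ⟨m + 1, x a + r - p, by linarith, by linarith, ?_, ?_⟩
      · rw [Finset.sum_insert ha, h2]; push_cast; ring
      · rw [Finset.sum_insert ha]
        nlinarith [mul_nonneg (sub_nonneg.2 hxa1) (sub_nonneg.2 h1)]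

/-- Let `G` be a finite abelian group, `k` a positive integer with `k ≤ |G|`, and
`p ∈ [1/(k+1), 1/k]`. If `x ∈ S(G)` satisfies `‖x‖_∞ ≤ p`, then
`‖Vx‖_∞ ≤ k·p² + (1 − k·p)²`; i.e. `V` maps `{x ∈ S(G) : ‖x‖_∞ ≤ p}` into
`{x ∈ S(G) : ‖x‖_∞ ≤ f(p)}` with `f(p) = k·p² + (1 − k·p)²`. -/
theorem qso_sup_norm_le {G : Type*} [AddCommGroup G] [Fintype G]
    (k : ℕ) (hk : 0 < k) (hkn : k ≤ Fintype.card G)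
    (p : ℝ) (hp : p ∈ Set.Icc (1 / (k + 1 : ℝ)) (1 / (k : ℝ)))
    (x : G → ℝ) (hx_nonneg : ∀ g, 0 ≤ x g) (hx_sum : ∑ g, x g = 1)
    (hx_norm : ‖x‖ ≤ p) :
    ‖QSO x‖ ≤ (k : ℝ) * p ^ 2 + (1 - (k : ℝ) * p) ^ 2 := by
  classical
  obtain ⟨hp1, hp2⟩ := hp
  have hkR : (0:ℝ) < k := by exact_mod_cast hk
  have hp0 : 0 < p := lt_of_lt_of_le (by positivity) hp1
  have hkp1 : (k:ℝ) * p ≤ 1 := by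
    have := (le_div_iff₀ hkR).mp hp2; linarith
  have hkp2 : 1 ≤ ((k:ℝ) + 1) * p := by
    have h1 : (0:ℝ) < (k:ℝ) + 1 := by positivity
    have := (div_le_iff₀ h1).mp hp1; linarith
  set t : ℝ := 1 - (k:ℝ) * p with ht
  have ht0 : 0 ≤ t := by simp [ht]; linarith
  have ht1 : t ≤ p := by simp [ht]; nlinarith
  -- pointwise bounds on x
  have hxp : ∀ g, x g ≤ p := by
    intro g
    calc x g ≤ |x g| := le_abs_self _
      _ = ‖x g‖ := (Real.norm_eq_abs _).symm
      _ ≤ ‖x‖ := norm_le_pi_norm x g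
      _ ≤ p := hx_norm
  -- key inequality via folding
  have key : t * (p - t) ≤ ∑ g, x g * (p - x g) := by
    obtain ⟨m, r, h0, h1, h2, h3⟩ :=
      fold_lemma x p hp0.le (fun g => ⟨hx_nonneg g, hxp g⟩) Finset.univ
    rw [hx_sum] at h2
    have hsq : 0 ≤ ∑ g, x g * (p - x g) :=
      Finset.sum_nonneg fun g _ => mul_nonneg (hx_nonneg g) (by linarith [hxp g])
    rcases lt_trichotomy m k with hm | hm | hm
    · -- then t = 0 forced (or contradiction), handle: t ≤ r - p ≤ 0 so t = 0
      have hmk : (m:ℝ) + 1 ≤ k := by exact_mod_cast hm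
      have : t ≤ 0 := by nlinarith [mul_le_mul_of_nonneg_right hmk hp0.le]
      have ht' : t = 0 := le_antisymm this ht0
      rw [ht']; simpa using hsq
    · have : r = t := by
        subst hm; rw [ht]; linarith
      rw [← this]; exact h3
    · have hmk : (k:ℝ) + 1 ≤ m := by exact_mod_cast hm
      have : p ≤ t := by nlinarith [mul_le_mul_of_nonneg_right hmk hp0.le]
      have ht' : t = p := le_antisymm ht1 this
      rw [ht']; simpa using hsq
  -- sum of squares bound
  have sumsq : ∑ g, (x g) ^ 2 ≤ (k:ℝ) * p ^ 2 + t ^ 2 := by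
    have e1 : ∑ g, (x g) ^ 2 = (∑ g, x g * p) - ∑ g, x g * (p - x g) := by
      rw [← Finset.sum_sub_distrib]
      exact Finset.sum_congr rfl fun g _ => by ring
    have e2 : ∑ g, x g * p = p := by
      rw [← Finset.sum_mul, hx_sum, one_mul]
    have e3 : (k:ℝ) * p ^ 2 + t ^ 2 = p - t * (p - t) := by
      rw [ht]; ring
    rw [e1, e2, e3]; linarith
  -- pointwise formula and bound for QSO
  have hQ : ∀ h, QSO x h = ∑ f, x f * x (h - f) := by
    intro h
    rw [QSO, Finset.sum_filter, Fintype.sum_prod_type]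
    refine Finset.sum_congr rfl fun f _ => ?_
    simp only [← eq_sub_iff_add_eq']
    simp
  have hpt : ∀ h, QSO x h ≤ ∑ g, (x g) ^ 2 := by
    intro h
    rw [hQ h]
    have step : ∑ f, x f * x (h - f) ≤ ∑ f, ((x f) ^ 2 + (x (h - f)) ^ 2) / 2 :=
      Finset.sum_le_sum fun f _ => by nlinarith [sq_nonneg (x f - x (h - f))]
    have h2 : ∑ f, (x (h - f)) ^ 2 = ∑ f, (x f) ^ 2 :=
      Fintype.sum_equiv (Equiv.subLeft h) _ _ fun f => rfl
    have h3 : ∑ f, ((x f) ^ 2 + (x (h - f)) ^ 2) / 2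
        = ((∑ f, (x f) ^ 2) + ∑ f, (x (h - f)) ^ 2) / 2 := by
      rw [← Finset.sum_add_distrib, Finset.sum_div]
    rw [h3, h2] at step
    linarith
  have hQnn : ∀ h, 0 ≤ QSO x h := by
    intro h
    rw [hQ h]
    exact Finset.sum_nonneg fun f _ => mul_nonneg (hx_nonneg f) (hx_nonneg _)
  have hC : (0:ℝ) ≤ (k:ℝ) * p ^ 2 + (1 - (k:ℝ) * p) ^ 2 := by positivity
  rw [pi_norm_le_iff_of_nonneg hC]
  intro h
  rw [Real.norm_eq_abs, abs_of_nonneg (hQnn h)]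
  calc QSO x h ≤ ∑ g, (x g) ^ 2 := hpt h
    _ ≤ (k:ℝ) * p ^ 2 + t ^ 2 := sumsq
    _ = (k:ℝ) * p ^ 2 + (1 - (k:ℝ) * p) ^ 2 := by rw [ht]
end

section
/- Fix a positive integer k and define f : [1/(k+1), 1/k] → ℝ by f(p) = k·p² + (1 − k·p)². Then: (i) f maps the interval [1/(k+1), 1/k] into itself; (ii) f(p) < p for every p in the open interval (1/(k+1), 1/k), while f(1/(k+1)) = 1/(k+1) and f(1/k) = 1/k; (iii) for every p ∈ [1/(k+1), 1/k), the sequence of iterates f^m(p) is non-increasing and converges to 1/(k+1) as m → ∞. -/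
open Filter

/-- Fix a positive integer `k` and let `f(p) = k·p² + (1 − k·p)²`. Then
(i) `f` maps `[1/(k+1), 1/k]` into itself;
(ii) `f(p) < p` on the open interval `(1/(k+1), 1/k)`, while the endpoints are fixed
points of `f`;
(iii) for every `p ∈ [1/(k+1), 1/k)`, the sequence of iterates `f^[m] p` is
non-increasing and converges to `1/(k+1)`. -/
theorem iterates_of_max_sum_sq_bound (k : ℕ) (hk : 0 < k)
    (f : ℝ → ℝ) (hf : ∀ p, f p = (k : ℝ) * p ^ 2 + (1 - (k : ℝ) * p) ^ 2) :
    (∀ p ∈ Set.Icc (1 / (k + 1 : ℝ)) (1 / (k : ℝ)),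
        f p ∈ Set.Icc (1 / (k + 1 : ℝ)) (1 / (k : ℝ))) ∧
    (∀ p ∈ Set.Ioo (1 / (k + 1 : ℝ)) (1 / (k : ℝ)), f p < p) ∧
    f (1 / (k + 1 : ℝ)) = 1 / (k + 1 : ℝ) ∧
    f (1 / (k : ℝ)) = 1 / (k : ℝ) ∧
    (∀ p ∈ Set.Ico (1 / (k + 1 : ℝ)) (1 / (k : ℝ)),
        (∀ m : ℕ, f^[m + 1] p ≤ f^[m] p) ∧
        Tendsto (fun m => f^[m] p) atTop (nhds (1 / (k + 1 : ℝ)))) := by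
  have hk0 : (0 : ℝ) < (k : ℝ) := by exact_mod_cast hk
  have hk1 : (0 : ℝ) < (k : ℝ) + 1 := by linarith
  set a : ℝ := 1 / (k + 1 : ℝ) with ha
  set b : ℝ := 1 / (k : ℝ) with hb
  have hab : a < b := by
    rw [ha, hb]
    apply one_div_lt_one_div_of_lt hk0
    linarith
  -- key identities
  have key1 : ∀ p : ℝ, f p - p = (((k : ℝ) + 1) * p - 1) * ((k : ℝ) * p - 1) := by
    intro p; rw [hf]; ring
  have key2 : ∀ p : ℝ, f p - a = (k : ℝ) * (p - a) * (((k : ℝ) + 1) * p - 1) := by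
    intro p; rw [hf, ha]; field_simp; ring
  have hfa : f a = a := by
    rw [hf, ha]; field_simp; ring
  have hfb : f b = b := by
    rw [hf, hb]; field_simp; ring
  -- bound facts on the interval
  have hga : ∀ p : ℝ, a ≤ p → 0 ≤ ((k : ℝ) + 1) * p - 1 := by
    intro p hp
    have : ((k : ℝ) + 1) * a = 1 := by rw [ha]; field_simp
    nlinarith
  have hgb : ∀ p : ℝ, p ≤ b → (k : ℝ) * p - 1 ≤ 0 := by
    intro p hp
    have : (k : ℝ) * b = 1 := by rw [hb]; field_simp
    nlinarith
  have hmem : ∀ p ∈ Set.Icc a b, f p ∈ Set.Icc a b := by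
    rintro p ⟨hp1, hp2⟩
    constructor
    · have h := mul_nonneg (mul_nonneg hk0.le (sub_nonneg.2 hp1)) (hga p hp1)
      linarith [key2 p]
    · nlinarith [key1 p, hga p hp1, hgb p hp2]
  have hlt : ∀ p ∈ Set.Ioo a b, f p < p := by
    rintro p ⟨hp1, hp2⟩
    have h1 : 0 < ((k : ℝ) + 1) * p - 1 := by
      have : ((k : ℝ) + 1) * a = 1 := by rw [ha]; field_simp
      nlinarith
    have h2 : (k : ℝ) * p - 1 < 0 := by
      have : (k : ℝ) * b = 1 := by rw [hb]; field_simp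
      nlinarith
    nlinarith [key1 p]
  refine ⟨hmem, hlt, hfa, hfb, ?_⟩
  rintro p ⟨hp1, hp2⟩
  -- invariance of Ico and decrease
  have hstep : ∀ q ∈ Set.Ico a b, f q ∈ Set.Ico a b ∧ f q ≤ q := by
    rintro q ⟨hq1, hq2⟩
    have hle : f q ≤ q := by nlinarith [key1 q, hga q hq1, hgb q (le_of_lt hq2)]
    have hge : a ≤ f q := by
      have h := mul_nonneg (mul_nonneg hk0.le (sub_nonneg.2 hq1)) (hga q hq1)
      linarith [key2 q]
    exact ⟨⟨hge, lt_of_le_of_lt hle hq2⟩, hle⟩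
  have hiter : ∀ m : ℕ, f^[m] p ∈ Set.Ico a b := by
    intro m
    induction m with
    | zero => exact ⟨hp1, hp2⟩
    | succ n ih =>
      rw [Function.iterate_succ_apply']
      exact (hstep _ ih).1
  have hdec : ∀ m : ℕ, f^[m + 1] p ≤ f^[m] p := by
    intro m
    rw [Function.iterate_succ_apply']
    exact (hstep _ (hiter m)).2
  refine ⟨hdec, ?_⟩
  have hant : Antitone (fun m => f^[m] p) := antitone_nat_of_succ_le hdec
  have hbdd : BddBelow (Set.range fun m => f^[m] p) :=
    ⟨a, by rintro x ⟨m, rfl⟩; exact (hiter m).1⟩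
  set L : ℝ := ⨅ m, f^[m] p with hL
  have htend : Tendsto (fun m => f^[m] p) atTop (nhds L) :=
    tendsto_atTop_ciInf hant hbdd
  have hcont : Continuous f := by
    have : f = fun p => (k : ℝ) * p ^ 2 + (1 - (k : ℝ) * p) ^ 2 := funext hf
    rw [this]
    exact (continuous_const.mul (continuous_pow 2)).add
      ((continuous_const.sub (continuous_const.mul continuous_id)).pow 2)
  have hLb : L < b := lt_of_le_of_lt (ciInf_le hbdd 0) hp2
  have hLa : a ≤ L := le_ciInf fun m => (hiter m).1
  have hfL : f L = L := by
    have h1 : Tendsto (fun m => f^[m + 1] p) atTop (nhds L) :=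
      htend.comp (tendsto_add_atTop_nat 1)
    have h2 : Tendsto (fun m => f (f^[m] p)) atTop (nhds (f L)) :=
      (hcont.continuousAt.tendsto).comp htend
    have h3 : (fun m => f (f^[m] p)) = fun m => f^[m + 1] p := by
      funext m; rw [Function.iterate_succ_apply']
    rw [h3] at h2
    exact tendsto_nhds_unique h2 h1
  have hLeq : L = a := by
    have h0 : (((k : ℝ) + 1) * L - 1) * ((k : ℝ) * L - 1) = 0 := by
      have := key1 L; rw [hfL] at this; linarith
    have h2 : (k : ℝ) * L - 1 < 0 := by
      have : (k : ℝ) * b = 1 := by rw [hb]; field_simp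
      nlinarith
    have h1 : ((k : ℝ) + 1) * L - 1 = 0 := by
      rcases mul_eq_zero.mp h0 with h | h
      · exact h
      · linarith
    have : ((k : ℝ) + 1) * a = 1 := by rw [ha]; field_simp
    have hne : ((k : ℝ) + 1) ≠ 0 := by linarith
    rw [ha, eq_div_iff hne]
    linarith
  rw [← hLeq]
  exact htend
end

section
/- Let G be a finite abelian group, k a positive integer, and x ∈ S(G). If ‖x‖_∞ = 1/k and ‖Vx‖_∞ = 1/k, then there exists a subset A ⊆ G with |A| = k such that x(g) = 1/k for all g ∈ A and x(g) = 0 for all g ∉ A (i.e. exactly k coordinates of x equal 1/k and all the others are zero). -/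
open Finset

/-- If `x ∈ S(G)` has `‖x‖_∞ = 1/k` and `‖Vx‖_∞ = 1/k`, then exactly `k` coordinates
of `x` equal `1/k` and all the others are zero. -/
theorem extremal_norm_implies_uniform_support {G : Type*} [AddCommGroup G] [Fintype G]
    (k : ℕ) (hk : 0 < k) (x : G → ℝ)
    (hx_nonneg : ∀ g, 0 ≤ x g) (hx_sum : ∑ g, x g = 1)
    (hx_norm : ‖x‖ = 1 / (k : ℝ)) (hVx_norm : ‖QSO x‖ = 1 / (k : ℝ)) :
    ∃ A : Finset G, A.card = k ∧
      (∀ g ∈ A, x g = 1 / (k : ℝ)) ∧ (∀ g ∉ A, x g = 0) := by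
  classical
  have hkR : (0:ℝ) < (k:ℝ) := by exact_mod_cast hk
  have hk' : (0:ℝ) < 1 / (k:ℝ) := by positivity
  have hxle : ∀ g, x g ≤ 1 / (k:ℝ) := by
    intro g
    have h1 : ‖x g‖ ≤ ‖x‖ := norm_le_pi_norm x g
    rw [hx_norm] at h1
    calc x g ≤ |x g| := le_abs_self _
      _ ≤ 1 / (k:ℝ) := h1
  have hQ : ∀ h, QSO x h = ∑ f, x f * x (h - f) := by
    intro h
    unfold QSO
    rw [Finset.sum_filter, Fintype.sum_prod_type]
    refine Finset.sum_congr rfl fun f _ => ?_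
    have : ∀ g : G, (if f + g = h then x f * x g else 0)
        = if g = h - f then x f * x g else 0 := by
      intro g
      congr 1
      simp [eq_sub_iff_add_eq, add_comm]
    simp_rw [this]
    simp
  -- find a maximizer h of ‖QSO x‖
  have hGne : (Finset.univ : Finset G).Nonempty := ⟨0, Finset.mem_univ 0⟩
  obtain ⟨h, -, hh⟩ := Finset.exists_mem_eq_sup Finset.univ hGne
    (fun b => ‖QSO x b‖₊)
  have hnorm : ‖QSO x h‖ = 1 / (k:ℝ) := by
    have : ‖QSO x‖ = ‖QSO x h‖ := by
      rw [Pi.norm_def, hh, coe_nnnorm]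
    rw [← this, hVx_norm]
  have hQnonneg : 0 ≤ QSO x h := by
    rw [hQ]
    exact Finset.sum_nonneg fun f _ => mul_nonneg (hx_nonneg f) (hx_nonneg _)
  have hQval : ∑ f, x f * x (h - f) = 1 / (k:ℝ) := by
    rw [← hQ]
    rwa [Real.norm_eq_abs, abs_of_nonneg hQnonneg] at hnorm
  have hsum1 : ∑ f : G, x f * (1 / (k:ℝ)) = 1 / (k:ℝ) := by
    rw [← Finset.sum_mul, hx_sum, one_mul]
  have hterm : ∀ f : G, x f * x (h - f) = x f * (1 / (k:ℝ)) := by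
    have := (Finset.sum_eq_sum_iff_of_le (s := Finset.univ)
      (fun f _ => mul_le_mul_of_nonneg_left (hxle (h - f)) (hx_nonneg f))).mp
      (by rw [hQval, hsum1])
    exact fun f => this f (Finset.mem_univ f)
  have hkey : ∀ f, 0 < x f → x (h - f) = 1 / (k:ℝ) := by
    intro f hf
    exact mul_left_cancel₀ (ne_of_gt hf) (hterm f)
  have hval : ∀ f, 0 < x f → x f = 1 / (k:ℝ) := by
    intro f hf
    have h1 : x (h - f) = 1 / (k:ℝ) := hkey f hf
    have h2 : 0 < x (h - f) := h1 ▸ hk'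
    have h3 := hkey (h - f) h2
    simpa using h3
  set A : Finset G := Finset.univ.filter (fun g => x g = 1 / (k:ℝ)) with hA
  have hnotA : ∀ g ∉ A, x g = 0 := by
    intro g hg
    by_contra h0
    have : 0 < x g := lt_of_le_of_ne (hx_nonneg g) (Ne.symm h0)
    exact hg (Finset.mem_filter.mpr ⟨Finset.mem_univ g, hval g this⟩)
  have hinA : ∀ g ∈ A, x g = 1 / (k:ℝ) := fun g hg => (Finset.mem_filter.mp hg).2
  have hcard : (A.card : ℝ) * (1 / (k:ℝ)) = 1 := by
    have hAsum : ∑ g ∈ A, x g = 1 := by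
      rw [← hx_sum]
      exact Finset.sum_subset (Finset.subset_univ A) (fun g _ hg => hnotA g hg)
    calc (A.card : ℝ) * (1 / (k:ℝ)) = ∑ _g ∈ A, (1 / (k:ℝ)) := by
          rw [Finset.sum_const, nsmul_eq_mul]
      _ = ∑ g ∈ A, x g := Finset.sum_congr rfl fun g hg => (hinA g hg).symm
      _ = 1 := hAsum
  have hcardk : A.card = k := by
    field_simp at hcard
    exact_mod_cast hcard
  exact ⟨A, hcardk, hinA, hnotA⟩
end

section
/- Let G be a finite abelian group, H a proper subgroup of G, p ∈ G, and let x ∈ S(G) be the uniform distribution on the coset p + H (x(g) = 1/|H| on p + H, zero elsewhere). Let i, j ∈ G lie in distinct cosets of H (i + H ≠ j + H), and let e : G → ℝ be the vector with e(s) = 1 for s ∈ i + H, e(s) = −1 for s ∈ j + H, and e(s) = 0 otherwise. Then Σ_{g∈G} e(g) = 0 (so e lies in the tangent plane of the simplex), and the Fréchet derivative of V at x applied to e equals 2·e', where e'(s) = 1 for s ∈ p + i + H, e'(s) = −1 for s ∈ p + j + H, and e'(s) = 0 otherwise. In particular the derivative of V at x expands this tangent direction by the factor 2. -/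
open Finset

open Classical in
noncomputable def convBil {G : Type*} [AddCommGroup G] [Fintype G] :
    (G → ℝ) →ₗ[ℝ] (G → ℝ) →ₗ[ℝ] (G → ℝ) :=
  LinearMap.mk₂ ℝ
    (fun x y h => ∑ pr ∈ Finset.univ.filter (fun pr : G × G => pr.1 + pr.2 = h), x pr.1 * y pr.2)
    (by intros m₁ m₂ n; funext h; simp [add_mul, Finset.sum_add_distrib])
    (by intros c m n; funext h; simp [Finset.mul_sum, mul_assoc])
    (by intros m n₁ n₂; funext h; simp [mul_add, Finset.sum_add_distrib])
    (by intros c m n; funext h; simp [Finset.mul_sum]; ring_nf; simp [mul_comm, mul_left_comm])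

noncomputable def convCLM {G : Type*} [AddCommGroup G] [Fintype G] :
    (G → ℝ) →L[ℝ] (G → ℝ) →L[ℝ] (G → ℝ) :=
  LinearMap.toContinuousLinearMap
    ((LinearMap.toContinuousLinearMap.toLinearMap).comp (convBil (G := G)))

theorem main_fderiv {G : Type*} [AddCommGroup G] [Fintype G] (x e : G → ℝ) :
    fderiv ℝ (QSO (G := G)) x e = convCLM x e + convCLM e x := by
  have hB := (convCLM (G := G)).isBoundedBilinearMap
  have hdiag : HasFDerivAt (fun y : G → ℝ => (y, y))
      ((ContinuousLinearMap.id ℝ (G → ℝ)).prod (ContinuousLinearMap.id ℝ (G → ℝ))) x :=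
    HasFDerivAt.prodMk (hasFDerivAt_id x) (hasFDerivAt_id x)
  have hq0 := HasFDerivAt.comp (f := fun y : (G → ℝ) => (y, y)) x (hB.hasFDerivAt (x, x)) hdiag
  have hq : HasFDerivAt (QSO (G := G))
      ((hB.deriv (x, x)).comp
        ((ContinuousLinearMap.id ℝ (G → ℝ)).prod (ContinuousLinearMap.id ℝ (G → ℝ)))) x := hq0
  rw [hq.fderiv]
  simp [hB.deriv_apply]

open Classical in
theorem card_coset {G : Type*} [AddCommGroup G] [Fintype G] (H : AddSubgroup G) (a : G) :
    (Finset.univ.filter fun g : G => g - a ∈ H).card = Nat.card H := by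
  rw [Nat.card_eq_fintype_card, ← Finset.card_univ]
  apply Finset.card_bij' (fun g _ => (⟨g - a, by simp_all⟩ : H)) (fun k _ => (k : G) + a)
  · intro k _; simp
  · intro g hg; simp
  · intro g _; simp
  · intro k _; simp

open Classical in
theorem conv_comm' {G : Type*} [AddCommGroup G] [Fintype G] (x e : G → ℝ) (h : G) :
    ∑ pr ∈ Finset.univ.filter (fun pr : G × G => pr.1 + pr.2 = h), e pr.1 * x pr.2
      = ∑ pr ∈ Finset.univ.filter (fun pr : G × G => pr.1 + pr.2 = h), x pr.1 * e pr.2 := by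
  apply Finset.sum_nbij' (fun pr => Prod.swap pr) (fun pr => Prod.swap pr)
  · intro pr hpr; simp only [Finset.mem_filter, Finset.mem_univ, true_and] at *
    rw [← hpr]; exact add_comm _ _
  · intro pr hpr; simp only [Finset.mem_filter, Finset.mem_univ, true_and] at *
    rw [← hpr]; exact add_comm _ _
  · intro pr _; simp
  · intro pr _; simp
  · intro pr _; exact mul_comm _ _

open Classical in
theorem conv_key {G : Type*} [AddCommGroup G] [Fintype G]
    (H : AddSubgroup G) (p i j : G) (hij : i - j ∉ H)
    (x : G → ℝ)
    (hx_mem : ∀ g, g - p ∈ H → x g = 1 / (Nat.card H : ℝ))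
    (hx_not_mem : ∀ g, g - p ∉ H → x g = 0)
    (e : G → ℝ)
    (he_i : ∀ s, s - i ∈ H → e s = 1)
    (he_j : ∀ s, s - j ∈ H → e s = -1)
    (he_zero : ∀ s, s - i ∉ H → s - j ∉ H → e s = 0)
    (e' : G → ℝ)
    (he'_i : ∀ s, s - (p + i) ∈ H → e' s = 1)
    (he'_j : ∀ s, s - (p + j) ∈ H → e' s = -1)
    (he'_zero : ∀ s, s - (p + i) ∉ H → s - (p + j) ∉ H → e' s = 0)
    (h : G) :
    ∑ pr ∈ Finset.univ.filter (fun pr : G × G => pr.1 + pr.2 = h), x pr.1 * e pr.2 = e' h := by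
  have hN : (0 : ℝ) < (Nat.card H : ℝ) := by
    have : 0 < Nat.card H := Nat.card_pos
    exact_mod_cast this
  -- step A : reduce to a single sum
  have hA : ∑ pr ∈ Finset.univ.filter (fun pr : G × G => pr.1 + pr.2 = h), x pr.1 * e pr.2
      = ∑ f : G, x f * e (h - f) := by
    apply Finset.sum_nbij' (fun pr => pr.1) (fun f => (f, h - f))
    · intro pr _; simp
    · intro f _; simp
    · intro pr hpr
      simp only [Finset.mem_filter, Finset.mem_univ, true_and] at hpr
      ext <;> simp [← hpr]
    · intro f _; rfl
    · intro pr hpr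
      simp only [Finset.mem_filter, Finset.mem_univ, true_and] at hpr
      rw [← hpr]; simp
  rw [hA]
  -- step B : restrict to the support of x
  have hsplit := Finset.sum_filter_add_sum_filter_not Finset.univ
    (fun f : G => f - p ∈ H) (fun f => x f * e (h - f))
  have hzero : ∑ f ∈ Finset.univ.filter (fun f : G => ¬ (f - p ∈ H)), x f * e (h - f) = 0 := by
    apply Finset.sum_eq_zero
    intro f hf
    simp only [Finset.mem_filter] at hf
    rw [hx_not_mem f hf.2, zero_mul]
  have hB : ∑ f : G, x f * e (h - f)
      = ∑ f ∈ Finset.univ.filter (fun f : G => f - p ∈ H), (1 / (Nat.card H : ℝ)) * e (h - f) := by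
    rw [← hsplit, hzero, add_zero]
    apply Finset.sum_congr rfl
    intro f hf
    simp only [Finset.mem_filter] at hf
    rw [hx_mem f hf.2]
  rw [hB]
  by_cases hi : h - (p + i) ∈ H
  · have hj : h - (p + j) ∉ H := by
      intro hj
      have : i - j ∈ H := by
        have := H.sub_mem hj hi
        have he : (h - (p + j)) - (h - (p + i)) = i - j := by abel
        rwa [he] at this
      exact hij this
    rw [he'_i h hi]
    have : ∀ f ∈ Finset.univ.filter (fun f : G => f - p ∈ H), (1 / (Nat.card H : ℝ)) * e (h - f)
        = 1 / (Nat.card H : ℝ) := by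
      intro f hf
      simp only [Finset.mem_filter] at hf
      have : (h - f) - i ∈ H := by
        have := H.sub_mem hi hf.2
        have he : (h - (p + i)) - (f - p) = (h - f) - i := by abel
        rwa [he] at this
      rw [he_i _ this, mul_one]
    rw [Finset.sum_congr rfl this, Finset.sum_const, card_coset, nsmul_eq_mul]
    field_simp
  · by_cases hj : h - (p + j) ∈ H
    · rw [he'_j h hj]
      have : ∀ f ∈ Finset.univ.filter (fun f : G => f - p ∈ H), (1 / (Nat.card H : ℝ)) * e (h - f)
          = -(1 / (Nat.card H : ℝ)) := by
        intro f hf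
        simp only [Finset.mem_filter] at hf
        have : (h - f) - j ∈ H := by
          have := H.sub_mem hj hf.2
          have he : (h - (p + j)) - (f - p) = (h - f) - j := by abel
          rwa [he] at this
        rw [he_j _ this]; ring
      rw [Finset.sum_congr rfl this, Finset.sum_const, card_coset, nsmul_eq_mul]
      field_simp
    · rw [he'_zero h hi hj]
      apply Finset.sum_eq_zero
      intro f hf
      simp only [Finset.mem_filter] at hf
      have h1 : (h - f) - i ∉ H := by
        intro hmem
        apply hi
        have := H.add_mem hmem hf.2
        have he : ((h - f) - i) + (f - p) = h - (p + i) := by abel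
        rwa [he] at this
      have h2 : (h - f) - j ∉ H := by
        intro hmem
        apply hj
        have := H.add_mem hmem hf.2
        have he : ((h - f) - j) + (f - p) = h - (p + j) := by abel
        rwa [he] at this
      rw [he_zero _ h1 h2, mul_zero]

/-- Let `H` be a proper subgroup of the finite abelian group `G`, let `x` be the uniform
distribution on a coset `p + H` (note `g ∈ p + H ↔ g - p ∈ H`), let `i, j` lie in
distinct cosets of `H`, and let `e` be `+1` on `i + H`, `-1` on `j + H`, `0` elsewhere.
Then `∑ e = 0` (so `e` is tangent to the simplex) and the Fréchet derivative of `V` at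
`x` sends `e` to `2·e'`, where `e'` is `+1` on `p + i + H`, `-1` on `p + j + H`, and
`0` elsewhere: an expanding tangent direction with factor `2`. -/
theorem fderiv_qso_coset_expands {G : Type*} [AddCommGroup G] [Fintype G]
    (H : AddSubgroup G) (hH : H ≠ ⊤) (p i j : G) (hij : i - j ∉ H)
    (x : G → ℝ)
    (hx_mem : ∀ g, g - p ∈ H → x g = 1 / (Nat.card H : ℝ))
    (hx_not_mem : ∀ g, g - p ∉ H → x g = 0)
    (e : G → ℝ)
    (he_i : ∀ s, s - i ∈ H → e s = 1)
    (he_j : ∀ s, s - j ∈ H → e s = -1)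
    (he_zero : ∀ s, s - i ∉ H → s - j ∉ H → e s = 0)
    (e' : G → ℝ)
    (he'_i : ∀ s, s - (p + i) ∈ H → e' s = 1)
    (he'_j : ∀ s, s - (p + j) ∈ H → e' s = -1)
    (he'_zero : ∀ s, s - (p + i) ∉ H → s - (p + j) ∉ H → e' s = 0) :
    (∑ g, e g = 0) ∧ fderiv ℝ (QSO (G := G)) x e = (2 : ℝ) • e' := by
  classical
  constructor
  · have he : ∀ g : G, e g = (if g - i ∈ H then (1 : ℝ) else 0) - (if g - j ∈ H then (1 : ℝ) else 0) := by
      intro g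
      by_cases hgi : g - i ∈ H
      · have hgj : g - j ∉ H := by
          intro hgj
          apply hij
          have := H.sub_mem hgj hgi
          have heq : (g - j) - (g - i) = i - j := by abel
          rwa [heq] at this
        rw [he_i g hgi, if_pos hgi, if_neg hgj]; ring
      · by_cases hgj : g - j ∈ H
        · rw [he_j g hgj, if_neg hgi, if_pos hgj]; ring
        · rw [he_zero g hgi hgj, if_neg hgi, if_neg hgj]; ring
    rw [Finset.sum_congr rfl (fun g _ => he g), Finset.sum_sub_distrib,
      Finset.sum_boole, Finset.sum_boole]
    rw [card_coset H i, card_coset H j]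
    ring
  · have hconv : convCLM x e = e' := by
      funext h
      exact conv_key H p i j hij x hx_mem hx_not_mem e he_i he_j he_zero e' he'_i he'_j he'_zero h
    have hconv2 : convCLM e x = e' := by
      funext h
      have : (convCLM e x) h
          = ∑ pr ∈ Finset.univ.filter (fun pr : G × G => pr.1 + pr.2 = h), e pr.1 * x pr.2 := rfl
      rw [this, conv_comm']
      exact conv_key H p i j hij x hx_mem hx_not_mem e he_i he_j he_zero e' he'_i he'_j he'_zero h
    rw [main_fderiv, hconv, hconv2, two_smul]
end
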